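/- arXiv:1401.0854 — 2 statements merged into one kernel-verified Lean document; each statement's English description precedes it below -/
import Mathlib

section
/- Let p be a prime, let m1, m2, k be integers, and let r ≥ 1 be an integer. Then binom(p^r·m1 + p^r·m2 - k - 1, p^r·m1) ≡ binom(p^{r-1}·m1 + p^{r-1}·m2 - ⌊k/p⌋ - 1, p^{r-1}·m1) (mod p^r), where ⌊k/p⌋ denotes the floor of k/p (floor division of integers). -/
open Finset

/-- The generalized binomial coefficient for integer entries: for `k ≥ 0` it is
`n(n-1)⋯(n-k+1)/k!`; for `k < 0` and `n - k ≥ 0` it is `binom n (n-k)`; and it is `0`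
when `k < 0` and `n - k < 0`. -/
def binom (n k : ℤ) : ℤ :=
  if 0 ≤ k then (∏ i ∈ Finset.range k.toNat, (n - (i : ℤ))) / (k.toNat.factorial : ℤ)
  else if 0 ≤ n - k then
    (∏ i ∈ Finset.range (n - k).toNat, (n - (i : ℤ))) / ((n - k).toNat.factorial : ℤ)
  else 0

namespace S18
def Pw (u : ℤ) (n : ℕ) : ℤ := ∏ i ∈ Finset.range n, (u + i + 1)

def Uw (p : ℕ) (u : ℤ) (n : ℕ) : ℤ :=
  ∏ i ∈ Finset.range n, if (p:ℤ) ∣ (u + i + 1) then 1 else (u + i + 1)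

lemma Pw_succ (u : ℤ) (n : ℕ) : Pw u (n+1) = Pw u n * (u + n + 1) := by
  simpa [Pw] using Finset.prod_range_succ (fun i : ℕ => (u + i + 1)) n

lemma Uw_succ (p : ℕ) (u : ℤ) (n : ℕ) :
    Uw p u (n+1) = Uw p u n * (if (p:ℤ) ∣ (u + n + 1) then 1 else (u + n + 1)) := by
  simpa [Uw] using Finset.prod_range_succ
    (fun i : ℕ => if (p:ℤ) ∣ (u + i + 1) then 1 else (u + i + 1)) n

lemma Uw_add (p : ℕ) (u : ℤ) (a b : ℕ) : Uw p u (a + b) = Uw p u a * Uw p (u + a) b := by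
  rw [Uw, Finset.prod_range_add]
  congr 1
  apply Finset.prod_congr rfl
  intro i _
  have h : u + ((a : ℤ) + i) + 1 = (u + a) + i + 1 := by ring
  push_cast
  rw [h]

lemma Pw_factorial (n : ℕ) : Pw 0 n = (n.factorial : ℤ) := by
  induction n with
  | zero => simp [Pw]
  | succ n ih => rw [Pw_succ, ih, Nat.factorial_succ]; push_cast; ring

lemma desc_eq_Pw (v : ℤ) (n : ℕ) :
    (∏ i ∈ Finset.range n, (v - (i:ℤ))) = Pw (v - n) n := by
  rw [Pw, ← Finset.prod_range_reflect (fun i : ℕ => (v - (n:ℤ)) + i + 1) n]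
  apply Finset.prod_congr rfl
  intro i hi
  have hin : i < n := Finset.mem_range.mp hi
  have : ((n - 1 - i : ℕ) : ℤ) = (n : ℤ) - 1 - i := by omega
  rw [this]; ring

lemma descFactorial_cast (m k : ℕ) (h : k ≤ m) :
    ((m.descFactorial k : ℤ)) = ∏ i ∈ Finset.range k, ((m:ℤ) - i) := by
  induction k with
  | zero => simp
  | succ k ih =>
    rw [Nat.descFactorial_succ, Finset.prod_range_succ, ← ih (by omega)]
    have : ((m - k : ℕ) : ℤ) = (m:ℤ) - k := by omega
    push_cast
    rw [this]; ring

lemma fact_dvd_Pw (u : ℤ) (n : ℕ) : (n.factorial : ℤ) ∣ Pw u n := by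
  rcases le_or_gt 0 u with hu | hu
  · have h1 : Pw u n = ((u.toNat + n).descFactorial n : ℤ) := by
      rw [descFactorial_cast _ _ (by omega)]
      have h2 : ((u.toNat + n : ℕ) : ℤ) = u + n := by omega
      rw [h2, desc_eq_Pw]
      congr 1
      ring
    rw [h1]
    exact_mod_cast Int.natCast_dvd_natCast.mpr (Nat.factorial_dvd_descFactorial _ _)
  rcases lt_or_ge (u + n) 0 with hun | hun
  · have h1 : Pw u n = (-1)^n * (((-u-1).toNat).descFactorial n : ℤ) := by
      rw [descFactorial_cast _ _ (by omega), Pw,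
        show ((-1:ℤ))^n = ∏ _i ∈ Finset.range n, (-1:ℤ) from by simp,
        ← Finset.prod_mul_distrib]
      apply Finset.prod_congr rfl
      intro i _
      have h2 : (((-u-1).toNat : ℕ) : ℤ) = -u-1 := by omega
      rw [h2]; ring
    rw [h1]
    exact Dvd.dvd.mul_left (Int.natCast_dvd_natCast.mpr (Nat.factorial_dvd_descFactorial _ _)) _
  · have h1 : Pw u n = 0 := by
      apply Finset.prod_eq_zero (i := (-u-1).toNat)
      · exact Finset.mem_range.mpr (by omega)
      · have h2 : (((-u-1).toNat : ℕ) : ℤ) = -u-1 := by omega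
        rw [h2]; ring
    rw [h1]
    exact dvd_zero _

lemma fdiv_help {p : ℕ} (hp : 0 < p) (q s : ℤ) (h0 : 0 ≤ s) (h1 : s < p) :
    (s + q * (p:ℤ)).fdiv p = q := by
  have hp' : (0:ℤ) < p := by exact_mod_cast hp
  rw [Int.fdiv_eq_ediv_of_nonneg _ (le_of_lt hp'), Int.add_mul_ediv_right _ _ (ne_of_gt hp'),
    Int.ediv_eq_zero_of_lt h0 h1, zero_add]

lemma fdiv_mono {p : ℕ} (hp : 0 < p) {a b : ℤ} (h : a ≤ b) : a.fdiv p ≤ b.fdiv p := by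
  have hp' : (0:ℤ) < p := by exact_mod_cast hp
  rw [Int.fdiv_eq_ediv_of_nonneg _ (le_of_lt hp'), Int.fdiv_eq_ediv_of_nonneg _ (le_of_lt hp')]
  exact Int.ediv_le_ediv hp' h

lemma fdiv_step_dvd {p : ℕ} (hp : 0 < p) {x : ℤ} (h : (p:ℤ) ∣ x) :
    x.fdiv p = (x - 1).fdiv p + 1 := by
  obtain ⟨y, rfl⟩ := h
  have h1 : ((p:ℤ) * y).fdiv p = y := by
    have := fdiv_help hp y 0 le_rfl (by exact_mod_cast hp)
    simpa [mul_comm] using this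
  have h2 : ((p:ℤ) * y - 1).fdiv p = y - 1 := by
    have := fdiv_help hp (y - 1) ((p:ℤ) - 1) (by omega) (by omega)
    rw [show ((p:ℤ) - 1) + (y - 1) * p = (p:ℤ) * y - 1 by ring] at this
    exact this
  omega

lemma fdiv_step_ndvd {p : ℕ} (hp : 0 < p) {x : ℤ} (h : ¬ (p:ℤ) ∣ x) :
    x.fdiv p = (x - 1).fdiv p := by
  have hp' : (0:ℤ) < p := by exact_mod_cast hp
  have hs0 : 0 ≤ x % p := Int.emod_nonneg _ (ne_of_gt hp')
  have hs1 : x % p < p := Int.emod_lt_of_pos _ hp'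
  have hsne : x % p ≠ 0 := fun hc => h (Int.dvd_of_emod_eq_zero hc)
  have hx : x = (x % p) + (x / p) * p := by
    have h := Int.mul_ediv_add_emod x p
    linarith [mul_comm (p:ℤ) (x / p)]
  have h1 : x.fdiv p = x / p := by
    nth_rewrite 1 [hx]
    exact fdiv_help hp _ _ hs0 hs1
  have h2 : (x - 1).fdiv p = x / p := by
    rw [show x - 1 = (x % p - 1) + (x / p) * p by linarith [Int.mul_ediv_add_emod x p, mul_comm (p:ℤ) (x / p)]]
    exact fdiv_help hp _ _ (by omega) (by omega)
  omega

lemma split {p : ℕ} (hp : 0 < p) (u : ℤ) (n : ℕ) :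
    Pw u n = (p:ℤ) ^ (((u + n).fdiv p - u.fdiv p).toNat)
      * Pw (u.fdiv p) (((u + n).fdiv p - u.fdiv p).toNat) * Uw p u n := by
  induction n with
  | zero => simp [Pw, Uw]
  | succ n ih =>
    have hmono : u.fdiv p ≤ (u + n).fdiv p := fdiv_mono hp (by omega)
    have hc : (u + ((n:ℤ)+1)) = (u + n) + 1 := by ring
    by_cases hx : (p:ℤ) ∣ (u + n + 1)
    · have e1 : (u + n + 1).fdiv p = (u + n).fdiv p + 1 := by
        have := fdiv_step_dvd hp hx
        simpa using this
      have e2 : ((u + ((n:ℤ)+1)).fdiv p - u.fdiv p).toNat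
          = (((u + n).fdiv p - u.fdiv p).toNat) + 1 := by
        rw [hc, e1]; omega
      have hy : u + n + 1 = (p:ℤ) * ((u + n).fdiv p + 1) := by
        obtain ⟨y, hyy⟩ := hx
        have : (u + n + 1).fdiv p = y := by
          rw [hyy]
          have := fdiv_help hp y 0 le_rfl (by exact_mod_cast hp)
          simpa [mul_comm] using this
        rw [hyy, ← e1, this]
      rw [Pw_succ, Uw_succ, if_pos hx, mul_one, ih]
      push_cast
      rw [e2, Pw_succ, pow_succ]
      have hd : u.fdiv p + (((u + ↑n).fdiv ↑p - u.fdiv ↑p).toNat : ℤ) + 1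
          = (u + n).fdiv p + 1 := by omega
      rw [hd]
      rw [show u + (↑n:ℤ) + 1 = (p:ℤ) * ((u + n).fdiv p + 1) from hy]
      ring
    · have e1 : (u + n + 1).fdiv p = (u + n).fdiv p := by
        have := fdiv_step_ndvd hp hx
        simpa using this
      have e2 : ((u + ((n:ℤ)+1)).fdiv p - u.fdiv p).toNat
          = (((u + n).fdiv p - u.fdiv p).toNat) := by rw [hc, e1]
      rw [Pw_succ, Uw_succ, if_neg hx, ih]
      push_cast
      rw [e2]
      ring

lemma cast_Uw (p r : ℕ) (u : ℤ) (n : ℕ) :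
    ((Uw p u n : ℤ) : ZMod (p^r)) =
      ∏ i ∈ Finset.range n,
        if (p:ℤ) ∣ (u + i + 1) then 1 else ((u + (i:ℤ) + 1 : ℤ) : ZMod (p^r)) := by
  rw [Uw, Int.cast_prod]
  apply Finset.prod_congr rfl
  intro i _
  rw [apply_ite (Int.cast : ℤ → ZMod (p^r)), Int.cast_one]

lemma isUnit_int_cast {p : ℕ} (hp : p.Prime) {r : ℕ} (hr : 1 ≤ r) {x : ℤ} (hx : ¬ (p:ℤ) ∣ x) :
    IsUnit ((x : ℤ) : ZMod (p^r)) := by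
  have hN : (0:ℤ) < ((p^r : ℕ) : ℤ) := by
    have := hp.pos
    positivity
  set N : ℕ := p^r with hNdef
  have hm0 : 0 ≤ x % (N:ℤ) := Int.emod_nonneg _ (ne_of_gt hN)
  set m : ℕ := (x % (N:ℤ)).toNat with hmdef
  have hmz : (m : ℤ) = x % N := Int.toNat_of_nonneg hm0
  have h1 : ((x : ℤ) : ZMod N) = ((m : ℕ) : ZMod N) := by
    rw [show ((m : ℕ) : ZMod N) = ((m : ℤ) : ZMod N) by push_cast; rfl]
    rw [ZMod.intCast_eq_intCast_iff]
    rw [hmz]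
    exact (Int.emod_emod_of_dvd x dvd_rfl).symm
  rw [h1, ZMod.isUnit_iff_coprime]
  apply Nat.Coprime.pow_right
  rw [Nat.coprime_comm]
  apply (Nat.Prime.coprime_iff_not_dvd hp).mpr
  intro hd
  apply hx
  have h2 : (p:ℤ) ∣ (m:ℤ) := Int.natCast_dvd_natCast.mpr hd
  rw [hmz] at h2
  have h3 : (p:ℤ) ∣ (N:ℤ) := by
    rw [hNdef]
    push_cast
    exact dvd_pow_self _ (by omega)
  have h4 := Int.mul_ediv_add_emod x N
  have : x = (N:ℤ) * (x / N) + x % N := h4.symm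
  rw [this]
  exact dvd_add (h3.mul_right _) h2

lemma Uw_isUnit {p : ℕ} (hp : p.Prime) {r : ℕ} (hr : 1 ≤ r) (u : ℤ) (n : ℕ) :
    IsUnit ((Uw p u n : ℤ) : ZMod (p^r)) := by
  induction n with
  | zero => simp [Uw]
  | succ n ih =>
    rw [Uw_succ, Int.cast_mul]
    apply ih.mul
    by_cases hx : (p:ℤ) ∣ (u + n + 1)
    · rw [if_pos hx]; simp
    · rw [if_neg hx]; exact isUnit_int_cast hp hr hx

lemma Uw_shift {p : ℕ} (hp : p.Prime) {r : ℕ} (hr : 1 ≤ r) (u c : ℤ) (n : ℕ)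
    (h : ((p^r : ℕ) : ℤ) ∣ c) :
    ((Uw p (u + c) n : ℤ) : ZMod (p^r)) = ((Uw p u n : ℤ) : ZMod (p^r)) := by
  have hpc : (p:ℤ) ∣ c := by
    refine dvd_trans ?_ h
    push_cast
    exact dvd_pow_self _ (by omega)
  have hc0 : ((c : ℤ) : ZMod (p^r)) = 0 := (ZMod.intCast_zmod_eq_zero_iff_dvd c (p^r)).mpr h
  rw [cast_Uw, cast_Uw]
  apply Finset.prod_congr rfl
  intro i _
  have hiff : ((p:ℤ) ∣ (u + c + i + 1)) ↔ ((p:ℤ) ∣ (u + i + 1)) := by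
    rw [show u + c + i + 1 = c + (u + i + 1) by ring]
    exact dvd_add_right hpc
  by_cases hd : (p:ℤ) ∣ (u + i + 1)
  · rw [if_pos hd, if_pos (hiff.mpr hd)]
  · rw [if_neg hd, if_neg (fun hh => hd (hiff.mp hh))]
    push_cast
    rw [hc0]
    ring

lemma window_step {p : ℕ} (hp : p.Prime) {r : ℕ} (hr : 1 ≤ r) (v : ℤ) :
    ((Uw p (v+1) (p^r) : ℤ) : ZMod (p^r)) = ((Uw p v (p^r) : ℤ) : ZMod (p^r)) := by
  have hZ : Uw p v 1 * Uw p (v+1) (p^r) = Uw p v (p^r) * Uw p (v + (p^r : ℕ)) 1 := by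
    have h1 := Uw_add p v 1 (p^r)
    have h2 := Uw_add p v (p^r) 1
    rw [add_comm 1 (p^r)] at h1
    rw [h1] at h2
    push_cast at h2 ⊢
    rw [h2]
  have hZ' : ((Uw p v 1 : ℤ) : ZMod (p^r)) * ((Uw p (v+1) (p^r) : ℤ) : ZMod (p^r))
      = ((Uw p v (p^r) : ℤ) : ZMod (p^r)) * ((Uw p (v + (p^r : ℕ)) 1 : ℤ) : ZMod (p^r)) := by
    rw [← Int.cast_mul, ← Int.cast_mul, hZ]
  rw [Uw_shift hp hr v ((p^r : ℕ) : ℤ) 1 dvd_rfl] at hZ'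
  exact (Uw_isUnit hp hr (p := p) v 1).mul_left_cancel
    (by rw [hZ']; ring)

lemma window_const {p : ℕ} (hp : p.Prime) {r : ℕ} (hr : 1 ≤ r) (u : ℤ) :
    ((Uw p u (p^r) : ℤ) : ZMod (p^r)) = ((Uw p 0 (p^r) : ℤ) : ZMod (p^r)) := by
  induction u using Int.induction_on with
  | zero => rfl
  | succ u ih => rw [window_step hp hr u]; exact ih
  | pred u ih =>
    have := window_step hp hr (-(u+1))
    rw [show (-(u+1) + 1 : ℤ) = -u by ring] at this
    rw [show (-(u:ℤ) - 1) = -((u:ℤ)+1) by ring, ← this]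
    exact ih

lemma Uw_blocks {p : ℕ} (hp : p.Prime) {r : ℕ} (hr : 1 ≤ r) (m : ℕ) :
    ∀ u : ℤ, ((Uw p u (p^r * m) : ℤ) : ZMod (p^r)) = ((Uw p 0 (p^r * m) : ℤ) : ZMod (p^r)) := by
  induction m with
  | zero => intro u; rfl
  | succ m ih =>
    intro u
    have hsplit : ∀ v : ℤ, Uw p v (p^r * (m+1)) = Uw p v (p^r) * Uw p (v + (p^r : ℕ)) (p^r * m) := by
      intro v
      rw [show p^r * (m+1) = p^r + p^r * m by ring]
      exact Uw_add p v (p^r) (p^r * m)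
    rw [hsplit u, hsplit 0, Int.cast_mul, Int.cast_mul, window_const hp hr u,
      ih (u + (p^r : ℕ)), ih ((0:ℤ) + (p^r : ℕ))]

lemma gen {p : ℕ} (hp : p.Prime) {r : ℕ} (hr : 1 ≤ r) (u : ℤ) (n E : ℕ)
    (hdu : (u + (n:ℤ)).fdiv p - u.fdiv p = (E:ℤ))
    (hdn : ((n:ℤ)).fdiv p = (E:ℤ))
    (hU : ((Uw p u n : ℤ) : ZMod (p^r)) = ((Uw p 0 n : ℤ) : ZMod (p^r))) :
    (∏ i ∈ Finset.range n, ((u + (n:ℤ)) - (i:ℤ))) / (n.factorial : ℤ) ≡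
      (∏ i ∈ Finset.range E, ((u.fdiv p + (E:ℤ)) - (i:ℤ))) / (E.factorial : ℤ)
      [ZMOD (p:ℤ)^r] := by
  have hppos : 0 < p := hp.pos
  set X : ℤ := (∏ i ∈ Finset.range n, ((u + (n:ℤ)) - (i:ℤ))) / (n.factorial : ℤ) with hXdef
  set Y : ℤ := (∏ i ∈ Finset.range E, ((u.fdiv p + (E:ℤ)) - (i:ℤ))) / (E.factorial : ℤ) with hYdef
  have hnum1 : (∏ i ∈ Finset.range n, ((u + (n:ℤ)) - (i:ℤ))) = Pw u n := by
    rw [desc_eq_Pw]; congr 1; ring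
  have hnum2 : (∏ i ∈ Finset.range E, ((u.fdiv p + (E:ℤ)) - (i:ℤ))) = Pw (u.fdiv p) E := by
    rw [desc_eq_Pw]; congr 1; ring
  have hX : X * (n.factorial : ℤ) = Pw u n := by
    rw [hXdef, hnum1]; exact Int.ediv_mul_cancel (fact_dvd_Pw u n)
  have hY : Y * (E.factorial : ℤ) = Pw (u.fdiv p) E := by
    rw [hYdef, hnum2]; exact Int.ediv_mul_cancel (fact_dvd_Pw _ E)
  have hT : (((u + n).fdiv p - u.fdiv p).toNat) = E := by omega
  have hsplit1 : Pw u n = (p:ℤ) ^ E * Pw (u.fdiv p) E * Uw p u n := by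
    have := split hppos u n; rwa [hT] at this
  have hT0 : ((((0:ℤ) + n).fdiv p - (0:ℤ).fdiv p).toNat) = E := by
    rw [Int.zero_fdiv, zero_add, hdn]; omega
  have hsplit0 : (n.factorial : ℤ) = (p:ℤ) ^ E * (E.factorial : ℤ) * Uw p 0 n := by
    have := split hppos 0 n
    rw [hT0, Int.zero_fdiv, Pw_factorial, Pw_factorial] at this
    exact this
  have key : X * Uw p 0 n = Y * Uw p u n := by
    have hne : ((p:ℤ) ^ E * (E.factorial : ℤ)) ≠ 0 := by positivity
    apply mul_right_cancel₀ hne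
    calc X * Uw p 0 n * ((p:ℤ) ^ E * (E.factorial : ℤ))
        = X * ((p:ℤ) ^ E * (E.factorial : ℤ) * Uw p 0 n) := by ring
      _ = X * (n.factorial : ℤ) := by rw [← hsplit0]
      _ = (p:ℤ) ^ E * Pw (u.fdiv p) E * Uw p u n := by rw [hX, hsplit1]
      _ = (p:ℤ) ^ E * (Y * (E.factorial : ℤ)) * Uw p u n := by rw [hY]
      _ = Y * Uw p u n * ((p:ℤ) ^ E * (E.factorial : ℤ)) := by ring
  have keyZ : ((X : ℤ) : ZMod (p^r)) = ((Y : ℤ) : ZMod (p^r)) := by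
    apply (Uw_isUnit hp hr (p := p) 0 n).mul_left_cancel
    calc ((Uw p 0 n : ℤ) : ZMod (p^r)) * ((X : ℤ) : ZMod (p^r))
        = ((X * Uw p 0 n : ℤ) : ZMod (p^r)) := by push_cast; ring
      _ = ((Y * Uw p u n : ℤ) : ZMod (p^r)) := by rw [key]
      _ = ((Y : ℤ) : ZMod (p^r)) * ((Uw p u n : ℤ) : ZMod (p^r)) := by push_cast; ring
      _ = ((Uw p 0 n : ℤ) : ZMod (p^r)) * ((Y : ℤ) : ZMod (p^r)) := by rw [hU]; ring
  have := (ZMod.intCast_eq_intCast_iff X Y (p^r)).mp keyZ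
  simpa using this

lemma master {p : ℕ} (hp : p.Prime) {r : ℕ} (hr : 1 ≤ r) (t A B : ℤ)
    (ht1 : 1 ≤ t) (ht2 : t ≤ (p:ℤ)) (hB : ((p^r : ℕ) : ℤ) ∣ (p:ℤ) * B) :
    binom ((p:ℤ)*A - t) ((p:ℤ)*B) ≡ binom (A - 1) B [ZMOD (p:ℤ)^r] := by
  have hppos : 0 < p := hp.pos
  have hppos' : (0:ℤ) < p := by exact_mod_cast hppos
  rcases le_or_gt 0 B with hB0 | hB0
  · -- B ≥ 0
    have hpB0 : 0 ≤ (p:ℤ)*B := by positivity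
    set b : ℕ := B.toNat with hbdef
    have hbz : (b:ℤ) = B := Int.toNat_of_nonneg hB0
    have htn : ((p:ℤ)*B).toNat = p * b := by
      have : (p:ℤ)*B = ((p*b : ℕ) : ℤ) := by push_cast; rw [hbz]
      rw [this, Int.toNat_natCast]
    rw [binom, binom, if_pos hpB0, if_pos hB0, htn, hbdef]
    set n : ℕ := p * b with hndef
    set u : ℤ := (p:ℤ)*A - t - n with hudef
    have hu_n : u + (n:ℤ) = (p:ℤ)*A - t := by rw [hudef]; ring
    have f1 : ((p:ℤ)*A - t).fdiv p = A - 1 := by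
      rw [show (p:ℤ)*A - t = ((p:ℤ) - t) + (A-1) * p by ring]
      exact fdiv_help hppos _ _ (by omega) (by omega)
    have f2 : u.fdiv p = A - b - 1 := by
      rw [hudef, hndef, show (p:ℤ)*A - t - ((p*b : ℕ) : ℤ) = ((p:ℤ) - t) + (A - b - 1) * p by push_cast; ring]
      exact fdiv_help hppos _ _ (by omega) (by omega)
    have f3 : ((n:ℤ)).fdiv p = (b:ℤ) := by
      rw [hndef, show ((p*b : ℕ) : ℤ) = 0 + (b:ℤ) * p by push_cast; ring]
      exact fdiv_help hppos _ _ le_rfl hppos'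
    have hU : ((Uw p u n : ℤ) : ZMod (p^r)) = ((Uw p 0 n : ℤ) : ZMod (p^r)) := by
      have hdn : (p^r : ℕ) ∣ n := by
        have : ((p^r : ℕ) : ℤ) ∣ ((n : ℕ) : ℤ) := by
          rw [hndef]; push_cast; rw [hbz]; exact_mod_cast hB
        exact_mod_cast this
      obtain ⟨m, hm⟩ := hdn
      rw [hm]
      exact Uw_blocks hp hr m u
    have hgen := gen hp hr u n b (by rw [hu_n, f1, f2]; ring) f3 hU
    rw [hu_n, f2, show A - (b:ℤ) - 1 + b = A - 1 by ring] at hgen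
    exact hgen
  · -- B < 0
    have hpB : (p:ℤ)*B < 0 := mul_neg_of_pos_of_neg hppos' hB0
    rw [binom, binom, if_neg (not_le.mpr hpB), if_neg (not_le.mpr hB0)]
    rcases lt_or_ge (A - 1 - B) 0 with h2a | h2b
    · have h6 : (p:ℤ) * (A - B) ≤ 0 :=
        mul_nonpos_iff.mpr (Or.inl ⟨hppos'.le, by omega⟩)
      have h5 : (p:ℤ)*A - t - (p:ℤ)*B < 0 := by nlinarith
      rw [if_neg (not_le.mpr h5), if_neg (by omega)]
    · have hC1 : (1:ℤ) ≤ A - B := by omega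
      have hn0 : 0 ≤ (p:ℤ)*A - t - (p:ℤ)*B := by nlinarith
      rw [if_pos hn0, if_pos h2b]
      set n : ℕ := ((p:ℤ)*A - t - (p:ℤ)*B).toNat with hndef
      set E : ℕ := (A - 1 - B).toNat with hEdef
      have hnz : (n:ℤ) = (p:ℤ)*A - t - (p:ℤ)*B := Int.toNat_of_nonneg hn0
      have hEz : (E:ℤ) = A - 1 - B := Int.toNat_of_nonneg h2b
      have hu_n : (p:ℤ)*B + (n:ℤ) = (p:ℤ)*A - t := by rw [hnz]; ring
      have f1 : ((p:ℤ)*A - t).fdiv p = A - 1 := by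
        rw [show (p:ℤ)*A - t = ((p:ℤ) - t) + (A-1) * p by ring]
        exact fdiv_help hppos _ _ (by omega) (by omega)
      have f2 : ((p:ℤ)*B).fdiv p = B := by
        rw [show (p:ℤ)*B = 0 + B * p by ring]
        exact fdiv_help hppos _ _ le_rfl hppos'
      have f3 : ((n:ℤ)).fdiv p = (E:ℤ) := by
        have hfh := fdiv_help hppos (A - B - 1) ((p:ℤ) - t) (by omega) (by omega)
        rw [show ((p:ℤ) - t) + (A - B - 1) * ↑p = (p:ℤ)*A - t - (p:ℤ)*B by ring] at hfh
        rw [hnz]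
        omega
      have hU : ((Uw p ((p:ℤ)*B) n : ℤ) : ZMod (p^r)) = ((Uw p 0 n : ℤ) : ZMod (p^r)) := by
        have := Uw_shift hp hr 0 ((p:ℤ)*B) n hB
        rwa [zero_add] at this
      have hgen := gen hp hr ((p:ℤ)*B) n E (by rw [hu_n, f1, f2]; omega) f3 hU
      rw [hu_n, f2, show B + (E:ℤ) = A - 1 by omega] at hgen
      exact hgen

end S18

/-- For primes `p`, integers `m₁, m₂, k`, and `r ≥ 1`:
`binom(pʳm₁ + pʳm₂ - k - 1, pʳm₁) ≡ binom(p^{r-1}m₁ + p^{r-1}m₂ - ⌊k/p⌋ - 1, p^{r-1}m₁) (mod pʳ)`. -/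
theorem stmt18 (p : ℕ) (hp : p.Prime) (m1 m2 k : ℤ) (r : ℕ) (hr : 1 ≤ r) :
    binom ((p : ℤ) ^ r * m1 + (p : ℤ) ^ r * m2 - k - 1) ((p : ℤ) ^ r * m1) ≡
      binom ((p : ℤ) ^ (r - 1) * m1 + (p : ℤ) ^ (r - 1) * m2 - k.fdiv p - 1)
        ((p : ℤ) ^ (r - 1) * m1) [ZMOD (p : ℤ) ^ r] := by
  obtain ⟨s, rfl⟩ : ∃ s, r = s + 1 := ⟨r - 1, by omega⟩
  have hppos : 0 < p := hp.pos
  have hppos' : (0:ℤ) < p := by exact_mod_cast hppos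
  have hkd : k.fdiv p = k / p := Int.fdiv_eq_ediv_of_nonneg k (le_of_lt hppos')
  set q : ℤ := k / p with hqdef
  have hk : (p:ℤ) * q + k % p = k := by rw [hqdef]; exact Int.mul_ediv_add_emod k p
  have hs0 : 0 ≤ k % p := Int.emod_nonneg _ (ne_of_gt hppos')
  have hs1 : k % p < p := Int.emod_lt_of_pos _ hppos'
  set t : ℤ := k % p + 1 with htdef
  set A : ℤ := (p:ℤ)^s * (m1 + m2) - q with hAdef
  set B : ℤ := (p:ℤ)^s * m1 with hBdef
  have e1 : (p:ℤ)^(s+1) * m1 + (p:ℤ)^(s+1) * m2 - k - 1 = (p:ℤ)*A - t := by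
    rw [hAdef, htdef]; linear_combination hk
  have e2 : (p:ℤ)^(s+1) * m1 = (p:ℤ)*B := by rw [hBdef]; ring
  have e3 : (p:ℤ)^(s+1-1) * m1 + (p:ℤ)^(s+1-1) * m2 - k.fdiv p - 1 = A - 1 := by
    simp only [Nat.add_sub_cancel]
    rw [hAdef]; linear_combination (-1 : ℤ) * hkd
  have e4 : (p:ℤ)^(s+1-1) * m1 = B := by
    simp only [Nat.add_sub_cancel]
    rfl
  rw [e1, e2, e3, e4]
  apply S18.master hp hr t A B (by omega) (by omega)
  rw [hBdef]
  push_cast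
  exact Dvd.intro m1 (by ring)
end

section
/- Let p be a prime and let ℤ_p denote the ring of p-adic integers. Let a : ℤ → ℤ_p be such that for every integer s ≥ 0 and every integer l, the sum Σ_{k = l·p^s}^{(l+1)·p^s - 1} a(k) is divisible by p^s in ℤ_p (equivalently, Σ_{⌊k/p^s⌋ = l} a(k) ≡ 0 (mod p^s)). Let C : ℕ → ℤ → ℤ_p be such that for every integer r ≥ 1 and every integer k, C(r, k) ≡ C(r-1, ⌊k/p⌋) (mod p^r) in ℤ_p. Then for every integer r ≥ 0 and every integer l, Σ_{k = l·p^r}^{(l+1)·p^r - 1} a(k)·C(r, k) ≡ 0 (mod p^r) in ℤ_p. -/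
private lemma fdiv_eq_of_mem {p : ℤ} (hp : 0 < p) {m k : ℤ}
    (h1 : m * p ≤ k) (h2 : k ≤ (m + 1) * p - 1) : k.fdiv p = m := by
  rw [Int.fdiv_eq_ediv_of_nonneg _ hp.le]
  have hle : m ≤ k / p := (Int.le_ediv_iff_mul_le hp).mpr h1
  have hlt : k / p < m + 1 := (Int.ediv_lt_iff_lt_mul hp).mpr (by omega)
  omega

private lemma block_decomp {M : Type*} [AddCommMonoid M] {p : ℤ} (hp : 0 < p)
    (g : ℤ → M) (c d : ℤ) :
    ∑ k ∈ Finset.Icc (c * p) (d * p - 1), g k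
      = ∑ m ∈ Finset.Icc c (d - 1), ∑ k ∈ Finset.Icc (m * p) ((m + 1) * p - 1), g k := by
  rw [← Finset.sum_biUnion]
  · congr 1
    ext k
    simp only [Finset.mem_biUnion, Finset.mem_Icc]
    constructor
    · rintro ⟨hck, hkd⟩
      refine ⟨k / p, ⟨(Int.le_ediv_iff_mul_le hp).mpr hck, ?_⟩, ?_, ?_⟩
      · have : k / p < d := (Int.ediv_lt_iff_lt_mul hp).mpr (by omega)
        omega
      · exact Int.ediv_mul_le k hp.ne'
      · have := Int.lt_ediv_add_one_mul_self k hp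
        omega
    · rintro ⟨m, ⟨hcm, hmd⟩, hmk, hkm⟩
      constructor
      · calc c * p ≤ m * p := by nlinarith
          _ ≤ k := hmk
      · have : (m + 1) * p ≤ d * p := by nlinarith
        omega
  · intro x _ y _ hxy
    simp only [Finset.disjoint_left, Finset.mem_Icc]
    rintro k ⟨h1, h2⟩ ⟨h3, h4⟩
    exact hxy (by rw [← fdiv_eq_of_mem hp h1 h2, fdiv_eq_of_mem hp h3 h4])

private lemma key (p : ℕ) [hp : Fact p.Prime]
    (C : ℕ → ℤ → ℤ_[p])
    (hC : ∀ r : ℕ, 1 ≤ r → ∀ k : ℤ, (p : ℤ_[p]) ^ r ∣ C r k - C (r - 1) (k.fdiv p)) :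
    ∀ r : ℕ, ∀ a : ℤ → ℤ_[p],
      (∀ s : ℕ, ∀ l : ℤ,
        (p : ℤ_[p]) ^ s ∣ ∑ k ∈ Finset.Icc (l * (p : ℤ) ^ s) ((l + 1) * (p : ℤ) ^ s - 1), a k) →
      ∀ l : ℤ,
      (p : ℤ_[p]) ^ r ∣
        ∑ k ∈ Finset.Icc (l * (p : ℤ) ^ r) ((l + 1) * (p : ℤ) ^ r - 1), a k * C r k := by
  have hppos : (0 : ℤ) < (p : ℤ) := by exact_mod_cast hp.out.pos
  have hpne : (p : ℤ_[p]) ≠ 0 := Nat.cast_ne_zero.mpr hp.out.ne_zero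
  intro r
  induction r with
  | zero => intro a ha l; simpa using one_dvd _
  | succ r ih =>
    intro a ha l
    -- define a' m = (block sum of a over block m) / p
    have hS : ∀ m : ℤ, ∃ t : ℤ_[p],
        ∑ k ∈ Finset.Icc (m * (p : ℤ)) ((m + 1) * (p : ℤ) - 1), a k = (p : ℤ_[p]) * t := by
      intro m
      have := ha 1 m
      simp only [pow_one] at this
      exact this
    choose a' ha' using hS
    -- a' satisfies the block-sum hypothesis
    have ha'good : ∀ s : ℕ, ∀ l : ℤ,
        (p : ℤ_[p]) ^ s ∣
          ∑ m ∈ Finset.Icc (l * (p : ℤ) ^ s) ((l + 1) * (p : ℤ) ^ s - 1), a' m := by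
      intro s l
      have hdecomp :
          ∑ k ∈ Finset.Icc ((l * (p : ℤ) ^ s) * p) (((l + 1) * (p : ℤ) ^ s) * p - 1), a k
            = ∑ m ∈ Finset.Icc (l * (p : ℤ) ^ s) ((l + 1) * (p : ℤ) ^ s - 1),
                ∑ k ∈ Finset.Icc (m * (p : ℤ)) ((m + 1) * (p : ℤ) - 1), a k :=
        block_decomp hppos a _ _
      have h1 := ha (s + 1) l
      rw [show (l * (p : ℤ) ^ (s + 1)) = (l * (p : ℤ) ^ s) * p by ring,
        show ((l + 1) * (p : ℤ) ^ (s + 1) - 1) = ((l + 1) * (p : ℤ) ^ s) * p - 1 by ring,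
        hdecomp] at h1
      simp only [ha'] at h1
      rw [← Finset.mul_sum, pow_succ'] at h1
      exact (mul_dvd_mul_iff_left hpne).mp h1
    -- C (r+1) k = C r (k.fdiv p) + p^(r+1) * d k
    have hCd : ∀ k : ℤ, ∃ t : ℤ_[p],
        C (r + 1) k = C r (k.fdiv p) + (p : ℤ_[p]) ^ (r + 1) * t := by
      intro k
      obtain ⟨t, ht⟩ := hC (r + 1) (by omega) k
      simp only [Nat.add_sub_cancel] at ht
      exact ⟨t, by linear_combination ht⟩
    choose dd hdd using hCd
    have hsplit :
        ∑ k ∈ Finset.Icc (l * (p : ℤ) ^ (r + 1)) ((l + 1) * (p : ℤ) ^ (r + 1) - 1),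
            a k * C (r + 1) k
          = (∑ k ∈ Finset.Icc (l * (p : ℤ) ^ (r + 1)) ((l + 1) * (p : ℤ) ^ (r + 1) - 1),
              a k * C r (k.fdiv p))
            + (p : ℤ_[p]) ^ (r + 1) *
              ∑ k ∈ Finset.Icc (l * (p : ℤ) ^ (r + 1)) ((l + 1) * (p : ℤ) ^ (r + 1) - 1),
                a k * dd k := by
      rw [Finset.mul_sum, ← Finset.sum_add_distrib]
      apply Finset.sum_congr rfl
      intro k _
      rw [hdd k]; ring
    rw [hsplit]
    apply dvd_add
    · -- reindex by blocks
      have hdecomp :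
          ∑ k ∈ Finset.Icc ((l * (p : ℤ) ^ r) * p) (((l + 1) * (p : ℤ) ^ r) * p - 1),
              a k * C r (k.fdiv p)
            = ∑ m ∈ Finset.Icc (l * (p : ℤ) ^ r) ((l + 1) * (p : ℤ) ^ r - 1),
                ∑ k ∈ Finset.Icc (m * (p : ℤ)) ((m + 1) * (p : ℤ) - 1),
                  a k * C r (k.fdiv p) :=
        block_decomp hppos _ _ _
      rw [show (l * (p : ℤ) ^ (r + 1)) = (l * (p : ℤ) ^ r) * p by ring,
        show ((l + 1) * (p : ℤ) ^ (r + 1) - 1) = ((l + 1) * (p : ℤ) ^ r) * p - 1 by ring,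
        hdecomp]
      have hblocks : ∀ m ∈ Finset.Icc (l * (p : ℤ) ^ r) ((l + 1) * (p : ℤ) ^ r - 1),
          ∑ k ∈ Finset.Icc (m * (p : ℤ)) ((m + 1) * (p : ℤ) - 1), a k * C r (k.fdiv p)
            = (p : ℤ_[p]) * (a' m * C r m) := by
        intro m _
        have : ∑ k ∈ Finset.Icc (m * (p : ℤ)) ((m + 1) * (p : ℤ) - 1), a k * C r (k.fdiv p)
            = (∑ k ∈ Finset.Icc (m * (p : ℤ)) ((m + 1) * (p : ℤ) - 1), a k) * C r m := by
          rw [Finset.sum_mul]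
          apply Finset.sum_congr rfl
          intro k hk
          simp only [Finset.mem_Icc] at hk
          rw [fdiv_eq_of_mem hppos hk.1 hk.2]
        rw [this, ha' m]; ring
      rw [Finset.sum_congr rfl hblocks, ← Finset.mul_sum, pow_succ']
      exact mul_dvd_mul_left _ (ih a' ha'good l)
    · exact Dvd.intro _ rfl

/-- A p-adic summation lemma: if the block sums `∑_{⌊k/pˢ⌋ = l} a(k)` are divisible by `pˢ`
and `C(r, k) ≡ C(r-1, ⌊k/p⌋) (mod pʳ)` for `r ≥ 1`, then
`∑_{⌊k/pʳ⌋ = l} a(k) C(r, k) ≡ 0 (mod pʳ)` in the p-adic integers. -/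
theorem stmt19 (p : ℕ) [hp : Fact p.Prime] (a : ℤ → ℤ_[p])
    (ha : ∀ s : ℕ, ∀ l : ℤ,
      (p : ℤ_[p]) ^ s ∣ ∑ k ∈ Finset.Icc (l * (p : ℤ) ^ s) ((l + 1) * (p : ℤ) ^ s - 1), a k)
    (C : ℕ → ℤ → ℤ_[p])
    (hC : ∀ r : ℕ, 1 ≤ r → ∀ k : ℤ, (p : ℤ_[p]) ^ r ∣ C r k - C (r - 1) (k.fdiv p)) :
    ∀ r : ℕ, ∀ l : ℤ,
      (p : ℤ_[p]) ^ r ∣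
        ∑ k ∈ Finset.Icc (l * (p : ℤ) ^ r) ((l + 1) * (p : ℤ) ^ r - 1), a k * C r k := by
  intro r l
  exact key p C hC r a ha l
end
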